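/- (Krivine–Vasilescu Positivstellensatz) Let Ω = {x : gⱼ(x) ≥ 0, j=1,...,m} be compact with 0 ≤ gⱼ ≤ 1 on Ω for all j, and suppose {1, g₁,...,g_m} generates the ℝ-algebra ℝ[x]. If f is strictly positive on Ω, then f = Σ_{α,β} c_{α,β} Πⱼ gⱼ^{αⱼ} (1−gⱼ)^{βⱼ} for finitely many nonnegative coefficients c_{α,β}. -/

import Mathlib

open MvPolynomial Finset

namespace KVaux


/-- The ratio `choose k r / choose N r` as an explicit product. -/
noncomputable def Wt (N r k : ℕ) : ℝ := ∏ i ∈ Finset.range r, (((k : ℝ) - i) / ((N : ℝ) - i))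

lemma Wt_eq_zero {N r k : ℕ} (hk : k < r) (hr : r ≤ N) : Wt N r k = 0 := by
  apply Finset.prod_eq_zero (Finset.mem_range.2 hk)
  have : ((N : ℝ) - k) ≠ 0 := by
    have : (k : ℝ) < (N : ℝ) := by exact_mod_cast hk.trans_le hr
    linarith
  simp

lemma cast_descFactorial {a r : ℕ} (h : r ≤ a) :
    ((a.descFactorial r : ℝ)) = ∏ i ∈ Finset.range r, ((a : ℝ) - i) := by
  rw [Nat.descFactorial_eq_prod_range, Nat.cast_prod]
  apply Finset.prod_congr rfl
  intro i hi
  have hi' : i ≤ a := le_trans (le_of_lt (Finset.mem_range.1 hi)) h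
  push_cast [Nat.cast_sub hi']
  ring

lemma Wt_mul_choose {N r k : ℕ} (hr : r ≤ N) (hk : k ≤ N) :
    Wt N r k * (N.choose r : ℝ) = (k.choose r : ℝ) := by
  rcases lt_or_ge k r with h | h
  · rw [Wt_eq_zero h hr, Nat.choose_eq_zero_of_lt h]
    simp
  · have hprodN : (∏ i ∈ Finset.range r, ((N : ℝ) - i)) = (N.descFactorial r : ℝ) :=
      (cast_descFactorial hr).symm
    have hprodk : (∏ i ∈ Finset.range r, ((k : ℝ) - i)) = (k.descFactorial r : ℝ) :=
      (cast_descFactorial h).symm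
    have hNpos : (0 : ℝ) < (N.descFactorial r : ℝ) := by
      have := Nat.pos_of_ne_zero (fun h0 => (Nat.lt_irrefl N) (lt_of_lt_of_le (Nat.descFactorial_eq_zero_iff_lt.1 h0) hr))
      exact_mod_cast this
    have hfac : (0 : ℝ) < (r.factorial : ℝ) := by exact_mod_cast r.factorial_pos
    have hchooseN : (N.descFactorial r : ℝ) = (r.factorial : ℝ) * (N.choose r : ℝ) := by
      exact_mod_cast congrArg (Nat.cast (R := ℝ)) (Nat.descFactorial_eq_factorial_mul_choose N r)
    have hchoosek : (k.descFactorial r : ℝ) = (r.factorial : ℝ) * (k.choose r : ℝ) := by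
      exact_mod_cast congrArg (Nat.cast (R := ℝ)) (Nat.descFactorial_eq_factorial_mul_choose k r)
    have hW : Wt N r k = (k.descFactorial r : ℝ) / (N.descFactorial r : ℝ) := by
      rw [Wt, Finset.prod_div_distrib, hprodN, hprodk]
    rw [hW]
    field_simp
    nlinarith [hchooseN, hchoosek]

lemma Wt_nonneg {N r k : ℕ} (hr : r ≤ N) (hk : k ≤ N) : 0 ≤ Wt N r k := by
  rcases lt_or_ge k r with h | h
  · rw [Wt_eq_zero h hr]
  · apply Finset.prod_nonneg
    intro i hi
    have hi' := Finset.mem_range.1 hi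
    have h1 : (i : ℝ) ≤ (k : ℝ) := by exact_mod_cast le_of_lt (hi'.trans_le h)
    have h2 : (i : ℝ) < (N : ℝ) := by exact_mod_cast hi'.trans_le (h.trans hk) |>.trans_le le_rfl
    apply div_nonneg <;> linarith

lemma Wt_le_one {N r k : ℕ} (hr : r ≤ N) (hk : k ≤ N) : Wt N r k ≤ 1 := by
  rcases lt_or_ge k r with h | h
  · rw [Wt_eq_zero h hr]; norm_num
  · apply Finset.prod_le_one
    · intro i hi
      have hi' := Finset.mem_range.1 hi
      have h1 : (i : ℝ) ≤ (k : ℝ) := by exact_mod_cast le_of_lt (hi'.trans_le h)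
      have h2 : (i : ℝ) < (N : ℝ) := by exact_mod_cast hi'.trans_le (h.trans hk) |>.trans_le le_rfl
      apply div_nonneg <;> linarith
    · intro i hi
      have hi' := Finset.mem_range.1 hi
      have h2 : (i : ℝ) < (N : ℝ) := by
        exact_mod_cast lt_of_lt_of_le (hi'.trans_le h) hk
      have h3 : (k : ℝ) ≤ (N : ℝ) := by exact_mod_cast hk
      rw [div_le_one (by linarith)]
      linarith



variable {A : Type*} [CommRing A]

lemma bern_sum (Y : A) (N r : ℕ) (hr : r ≤ N) :
    ∑ k ∈ Finset.range (N + 1), (k.choose r : A) * (N.choose k : A) * (Y ^ k * (1 - Y) ^ (N - k)) =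
      (N.choose r : A) * Y ^ r := by
  have hsub : ∑ k ∈ Finset.range (N + 1), (k.choose r : A) * (N.choose k : A) *
      (Y ^ k * (1 - Y) ^ (N - k)) =
      ∑ k ∈ Finset.Ico r (N + 1), (k.choose r : A) * (N.choose k : A) *
      (Y ^ k * (1 - Y) ^ (N - k)) := by
    rw [Finset.range_eq_Ico]
    refine (Finset.sum_subset ?_ ?_).symm
    · exact Finset.Ico_subset_Ico (Nat.zero_le r) le_rfl
    · intro k hk hk'
      have : k < r := by
        simp only [Finset.mem_Ico] at hk hk'
        omega
      rw [Nat.choose_eq_zero_of_lt this]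
      simp
  rw [hsub, Finset.sum_Ico_eq_sum_range]
  have hlen : N + 1 - r = (N - r) + 1 := by omega
  rw [hlen]
  have key : ∀ j ∈ Finset.range ((N - r) + 1),
      ((r + j).choose r : A) * (N.choose (r + j) : A) * (Y ^ (r + j) * (1 - Y) ^ (N - (r + j))) =
      (N.choose r : A) * Y ^ r *
        (Y ^ j * (1 - Y) ^ ((N - r) - j) * ((N - r).choose j : A)) := by
    intro j hj
    have hj' : j ≤ N - r := by simpa using Nat.lt_succ_iff.1 (Finset.mem_range.1 hj)
    have h1 : r + j ≤ N := by omega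
    have h2 : N.choose (r + j) * (r + j).choose r = N.choose r * (N - r).choose (r + j - r) :=
      Nat.choose_mul (Nat.le_add_right r j)
    have h2' : (r + j).choose r * N.choose (r + j) = N.choose r * (N - r).choose j := by
      rw [Nat.mul_comm, h2, Nat.add_sub_cancel_left]
    have h3 : N - (r + j) = (N - r) - j := by omega
    have h4 : Y ^ (r + j) = Y ^ r * Y ^ j := pow_add Y r j
    calc ((r + j).choose r : A) * (N.choose (r + j) : A) * (Y ^ (r + j) * (1 - Y) ^ (N - (r + j)))
        = (((r + j).choose r * N.choose (r + j) : ℕ) : A) *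
            (Y ^ r * Y ^ j * (1 - Y) ^ ((N - r) - j)) := by
          rw [Nat.cast_mul, h3, h4]
      _ = ((N.choose r * (N - r).choose j : ℕ) : A) *
            (Y ^ r * Y ^ j * (1 - Y) ^ ((N - r) - j)) := by rw [h2']
      _ = (N.choose r : A) * Y ^ r * (Y ^ j * (1 - Y) ^ ((N - r) - j) * ((N - r).choose j : A)) := by
          push_cast
          ring
  rw [Finset.sum_congr rfl key, ← Finset.mul_sum]
  have : ∑ j ∈ Finset.range ((N - r) + 1), Y ^ j * (1 - Y) ^ ((N - r) - j) * ((N - r).choose j : A)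
      = 1 := by
    have := add_pow Y (1 - Y) (N - r)
    simp only [add_sub_cancel, one_pow] at this
    rw [← this]
  rw [this, mul_one]






variable {σ : Type*}

lemma pow_eq_bern (Y : MvPolynomial σ ℝ) (N r : ℕ) (hr : r ≤ N) :
    Y ^ r = ∑ k ∈ Finset.range (N + 1),
      C (Wt N r k * (N.choose k : ℝ)) * (Y ^ k * (1 - Y) ^ (N - k)) := by
  have hC : (C (N.choose r : ℝ) : MvPolynomial σ ℝ) ≠ 0 := by
    rw [Ne, MvPolynomial.C_eq_zero]
    exact_mod_cast Nat.choose_pos hr |>.ne'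
  apply mul_left_cancel₀ hC
  rw [Finset.mul_sum]
  have : ∀ k ∈ Finset.range (N + 1),
      (C (N.choose r : ℝ) : MvPolynomial σ ℝ) *
        (C (Wt N r k * (N.choose k : ℝ)) * (Y ^ k * (1 - Y) ^ (N - k))) =
      (k.choose r : MvPolynomial σ ℝ) * (N.choose k : MvPolynomial σ ℝ) *
        (Y ^ k * (1 - Y) ^ (N - k)) := by
    intro k hk
    have hk' : k ≤ N := Nat.lt_succ_iff.1 (Finset.mem_range.1 hk)
    have : (C (N.choose r : ℝ) : MvPolynomial σ ℝ) * C (Wt N r k * (N.choose k : ℝ)) =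
        (k.choose r : MvPolynomial σ ℝ) * (N.choose k : MvPolynomial σ ℝ) := by
      rw [← C_mul]
      have : (N.choose r : ℝ) * (Wt N r k * (N.choose k : ℝ)) =
          (k.choose r : ℝ) * (N.choose k : ℝ) := by
        rw [← mul_assoc, mul_comm (N.choose r : ℝ) (Wt N r k), Wt_mul_choose hr hk']
      rw [this, C_mul]
      simp [map_natCast]
    rw [← mul_assoc, this, mul_assoc]
  rw [Finset.sum_congr rfl this, bern_sum Y N r hr]
  simp [map_natCast]

variable [Fintype σ] [DecidableEq σ]

lemma prod_pow_eq_bern (a : σ → ℕ) (N : ℕ) (ha : ∀ j, a j ≤ N) :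
    (∏ j, (X j : MvPolynomial σ ℝ) ^ a j) =
      ∑ k ∈ Fintype.piFinset (fun _ : σ => Finset.range (N + 1)),
        C (∏ j, Wt N (a j) (k j) * (N.choose (k j) : ℝ)) *
          ∏ j, ((X j : MvPolynomial σ ℝ) ^ k j * (1 - X j) ^ (N - k j)) := by
  have : ∀ j, (X j : MvPolynomial σ ℝ) ^ a j = ∑ k ∈ Finset.range (N + 1),
      C (Wt N (a j) k * (N.choose k : ℝ)) * ((X j : MvPolynomial σ ℝ) ^ k * (1 - X j) ^ (N - k)) :=
    fun j => pow_eq_bern (X j) N (a j) (ha j)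
  rw [Finset.prod_congr rfl (fun j _ => this j), Finset.prod_univ_sum]
  apply Finset.sum_congr rfl
  intro k _
  rw [Finset.prod_mul_distrib, map_prod]





lemma abs_prod_sub_prod_le {ι : Type*} (s : Finset ι) (u v : ι → ℝ)
    (hu : ∀ i ∈ s, 0 ≤ u i ∧ u i ≤ 1) (hv : ∀ i ∈ s, 0 ≤ v i ∧ v i ≤ 1) :
    |∏ i ∈ s, u i - ∏ i ∈ s, v i| ≤ ∑ i ∈ s, |u i - v i| := by
  classical
  induction s using Finset.cons_induction with
  | empty => simp
  | cons a s ha ih =>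
    rw [Finset.prod_cons, Finset.prod_cons, Finset.sum_cons]
    have hP : 0 ≤ ∏ i ∈ s, u i ∧ ∏ i ∈ s, u i ≤ 1 := by
      constructor
      · exact Finset.prod_nonneg fun i hi => (hu i (Finset.mem_cons_of_mem hi)).1
      · exact Finset.prod_le_one (fun i hi => (hu i (Finset.mem_cons_of_mem hi)).1)
          (fun i hi => (hu i (Finset.mem_cons_of_mem hi)).2)
    have hQ : 0 ≤ ∏ i ∈ s, v i ∧ ∏ i ∈ s, v i ≤ 1 := by
      constructor
      · exact Finset.prod_nonneg fun i hi => (hv i (Finset.mem_cons_of_mem hi)).1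
      · exact Finset.prod_le_one (fun i hi => (hv i (Finset.mem_cons_of_mem hi)).1)
          (fun i hi => (hv i (Finset.mem_cons_of_mem hi)).2)
    have hua := hu a (Finset.mem_cons_self a s)
    have hva := hv a (Finset.mem_cons_self a s)
    have ih' := ih (fun i hi => hu i (Finset.mem_cons_of_mem hi))
      (fun i hi => hv i (Finset.mem_cons_of_mem hi))
    set P := ∏ i ∈ s, u i
    set Q := ∏ i ∈ s, v i
    have key : u a * P - v a * Q = u a * (P - Q) + (u a - v a) * Q := by ring
    have e1 : |u a * (P - Q)| ≤ |P - Q| := by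
      rw [abs_mul]
      apply mul_le_of_le_one_left (abs_nonneg _)
      rw [abs_of_nonneg hua.1]; exact hua.2
    have e2 : |(u a - v a) * Q| ≤ |u a - v a| := by
      rw [abs_mul]
      apply mul_le_of_le_one_right (abs_nonneg _)
      rw [abs_of_nonneg hQ.1]; exact hQ.2
    have e0 : |u a * P - v a * Q| ≤ |u a * (P - Q)| + |(u a - v a) * Q| := by
      rw [key]; exact abs_add_le _ _
    linarith

lemma Wt_sub_pow_bound {N d r k : ℕ} (hd : d < N) (hr : r ≤ d) (hk : k ≤ N) :
    |Wt N r k - ((k : ℝ) / N) ^ r| ≤ (d * d : ℝ) / ((N : ℝ) - d) := by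
  have hdN : (d : ℝ) < N := by exact_mod_cast hd
  have hN0 : (0 : ℝ) < N := lt_of_le_of_lt (Nat.cast_nonneg d) hdN
  have hNd : (0 : ℝ) < (N : ℝ) - d := by linarith
  have hkN : (k : ℝ) ≤ N := by exact_mod_cast hk
  have hrN : r ≤ N := hr.trans hd.le
  rcases lt_or_ge k r with h | h
  · -- k < r : Wt = 0, and (k/N)^r ≤ d/N ≤ d*d/(N-d)
    have hr1 : 1 ≤ r := Nat.one_le_iff_ne_zero.2 (by omega)
    have hd1 : (1 : ℝ) ≤ d := by exact_mod_cast hr.trans' hr1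
    rw [Wt_eq_zero h hrN, zero_sub, abs_neg, abs_of_nonneg (by positivity)]
    have h1 : ((k : ℝ) / N) ^ r ≤ (k : ℝ) / N := by
      apply pow_le_of_le_one (by positivity) _ (by omega)
      rw [div_le_one hN0]; exact hkN
    have h2 : (k : ℝ) / N ≤ (d : ℝ) / N := by
      gcongr
      exact_mod_cast (h.trans_le hr).le
    have hd0 : (0 : ℝ) ≤ d := Nat.cast_nonneg d
    have h3 : (d : ℝ) / N ≤ (d * d : ℝ) / ((N : ℝ) - d) := by
      rw [div_le_div_iff₀ hN0 hNd]
      nlinarith [mul_nonneg (mul_nonneg hd0 hN0.le) (by linarith : (0:ℝ) ≤ (d:ℝ) - 1)]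
    linarith
  · -- r ≤ k
    have hbound : ∀ i ∈ Finset.range r,
        |((k : ℝ) - i) / ((N : ℝ) - i) - (k : ℝ) / N| ≤ (d : ℝ) / ((N : ℝ) - d) := by
      intro i hi
      have hir : i < r := Finset.mem_range.1 hi
      have hiR : (i : ℝ) < r := by exact_mod_cast hir
      have hid : (i : ℝ) ≤ d := by
        have : i ≤ d := (hir.trans_le hr).le
        exact_mod_cast this
      have hNi : (0 : ℝ) < (N : ℝ) - i := by linarith
      have hki : (i : ℝ) ≤ k := by
        have : i ≤ k := hir.trans_le h |>.le
        exact_mod_cast this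
      have hform : ((k : ℝ) - i) / ((N : ℝ) - i) - (k : ℝ) / N =
          -((i : ℝ) * ((N : ℝ) - k) / (N * ((N : ℝ) - i))) := by
        field_simp
        ring
      have hnum : (0 : ℝ) ≤ (i : ℝ) * ((N : ℝ) - k) :=
        mul_nonneg (Nat.cast_nonneg i) (by linarith)
      have hden : (0 : ℝ) < (N : ℝ) * ((N : ℝ) - i) := mul_pos hN0 hNi
      rw [hform, abs_neg, abs_of_nonneg (div_nonneg hnum hden.le)]
      rw [div_le_div_iff₀ hden hNd]
      have hd0 : (0 : ℝ) ≤ d := Nat.cast_nonneg i |>.trans hid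
      have c1 : (i : ℝ) * ((N : ℝ) - k) ≤ (d : ℝ) * N := by nlinarith
      have c2 : (N : ℝ) - d ≤ (N : ℝ) - i := by linarith
      have c3 := mul_le_mul c1 c2 (by linarith) (by positivity)
      nlinarith [c3]
    have hu : ∀ i ∈ Finset.range r,
        0 ≤ ((k : ℝ) - i) / ((N : ℝ) - i) ∧ ((k : ℝ) - i) / ((N : ℝ) - i) ≤ 1 := by
      intro i hi
      have hir : i < r := Finset.mem_range.1 hi
      have hki : (i : ℝ) ≤ k := by exact_mod_cast (hir.trans_le h).le
      have hiN : (i : ℝ) < N := by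
        have : i < N := hir.trans_le (h.trans hk)
        exact_mod_cast this
      constructor
      · apply div_nonneg <;> linarith
      · rw [div_le_one (by linarith)]; linarith
    have hv : ∀ i ∈ Finset.range r, 0 ≤ (k : ℝ) / N ∧ (k : ℝ) / N ≤ 1 := by
      intro i _
      exact ⟨by positivity, by rw [div_le_one hN0]; exact hkN⟩
    have := abs_prod_sub_prod_le (Finset.range r) _ _ hu hv
    rw [Finset.prod_const] at this
    have hpow : ((k : ℝ) / N) ^ (Finset.range r).card = ((k : ℝ) / N) ^ r := by
      rw [Finset.card_range]
    rw [hpow] at this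
    refine le_trans this (le_trans (Finset.sum_le_sum hbound) ?_)
    rw [Finset.sum_const, Finset.card_range, nsmul_eq_mul]
    have hrd : (r : ℝ) ≤ d := by exact_mod_cast hr
    have hd0 : (0 : ℝ) ≤ d := Nat.cast_nonneg d
    rw [mul_div_assoc']
    apply (div_le_div_iff_of_pos_right hNd).2
    nlinarith





variable {m : ℕ}

/-- The Bernstein-basis coefficient (without the binomial factors). -/
noncomputable def bernCoeff (F : MvPolynomial (Fin m) ℝ) (N : ℕ) (k : Fin m → ℕ) : ℝ :=
  ∑ a ∈ F.support, F.coeff a * ∏ j, Wt N (a j) (k j)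

lemma exp_le_totalDegree {F : MvPolynomial (Fin m) ℝ} {a : Fin m →₀ ℕ}
    (ha : a ∈ F.support) (j : Fin m) : a j ≤ F.totalDegree := by
  refine le_trans ?_ (MvPolynomial.le_totalDegree ha)
  rcases Nat.eq_zero_or_pos (a j) with h | h
  · omega
  · have hj : j ∈ a.support := Finsupp.mem_support_iff.2 (by omega)
    exact Finset.single_le_sum (f := fun i => a i) (fun i _ => Nat.zero_le _) hj

lemma F_eq_bern (F : MvPolynomial (Fin m) ℝ) (N : ℕ)
    (hN : ∀ a ∈ F.support, ∀ j, (a : Fin m →₀ ℕ) j ≤ N) :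
    F = ∑ k ∈ Fintype.piFinset (fun _ : Fin m => Finset.range (N + 1)),
      C (bernCoeff F N k * ∏ j, (N.choose (k j) : ℝ)) *
        ∏ j, ((X j : MvPolynomial (Fin m) ℝ) ^ k j * (1 - X j) ^ (N - k j)) := by
  conv_lhs => rw [MvPolynomial.as_sum F]
  have hmono : ∀ a ∈ F.support, (monomial a (coeff a F) : MvPolynomial (Fin m) ℝ) =
      C (coeff a F) * ∏ j, (X j : MvPolynomial (Fin m) ℝ) ^ a j := by
    intro a _
    rw [MvPolynomial.monomial_eq]
    congr 1
    exact Finsupp.prod_fintype _ _ (fun j => pow_zero _)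
  rw [Finset.sum_congr rfl hmono]
  have hexp : ∀ a ∈ F.support,
      C (coeff a F) * ∏ j, (X j : MvPolynomial (Fin m) ℝ) ^ a j =
      ∑ k ∈ Fintype.piFinset (fun _ : Fin m => Finset.range (N + 1)),
        C (coeff a F * ∏ j, Wt N (a j) (k j)) *
          (C (∏ j, (N.choose (k j) : ℝ)) *
            ∏ j, ((X j : MvPolynomial (Fin m) ℝ) ^ k j * (1 - X j) ^ (N - k j))) := by
    intro a ha
    rw [prod_pow_eq_bern (fun j => a j) N (hN a ha), Finset.mul_sum]
    apply Finset.sum_congr rfl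
    intro k _
    rw [Finset.prod_mul_distrib, C_mul, C_mul]
    ring
  rw [Finset.sum_congr rfl hexp, Finset.sum_comm]
  apply Finset.sum_congr rfl
  intro k _
  rw [← Finset.sum_mul, ← map_sum, ← bernCoeff, C_mul]
  ring


lemma bernCoeff_close (F : MvPolynomial (Fin m) ℝ) {N : ℕ} (hd : F.totalDegree < N)
    (k : Fin m → ℕ) (hk : ∀ j, k j ≤ N) :
    |bernCoeff F N k - eval (fun j => (k j : ℝ) / N) F| ≤
      (∑ a ∈ F.support, |F.coeff a|) *
        (m * ((F.totalDegree * F.totalDegree : ℝ) / ((N : ℝ) - F.totalDegree))) := by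
  set d := F.totalDegree with hdef
  have hN0 : (0 : ℝ) < N := by
    have : 0 < N := Nat.lt_of_le_of_lt (Nat.zero_le d) hd
    exact_mod_cast this
  rw [MvPolynomial.eval_eq', bernCoeff, ← Finset.sum_sub_distrib]
  have step1 : ∀ a ∈ F.support,
      |F.coeff a * ∏ j, Wt N (a j) (k j) -
        F.coeff a * ∏ j, ((k j : ℝ) / N) ^ a j| ≤
      |F.coeff a| * (m * ((d * d : ℝ) / ((N : ℝ) - d))) := by
    intro a ha
    rw [← mul_sub, abs_mul]
    apply mul_le_mul_of_nonneg_left _ (abs_nonneg _)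
    have hu : ∀ j ∈ Finset.univ (α := Fin m), 0 ≤ Wt N (a j) (k j) ∧ Wt N (a j) (k j) ≤ 1 := by
      intro j _
      have hr : a j ≤ N := (exp_le_totalDegree ha j).trans hd.le
      exact ⟨Wt_nonneg hr (hk j), Wt_le_one hr (hk j)⟩
    have hv : ∀ j ∈ Finset.univ (α := Fin m),
        0 ≤ ((k j : ℝ) / N) ^ a j ∧ ((k j : ℝ) / N) ^ a j ≤ 1 := by
      intro j _
      have h1 : 0 ≤ (k j : ℝ) / N := by positivity
      have h2 : (k j : ℝ) / N ≤ 1 := by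
        rw [div_le_one hN0]
        exact_mod_cast hk j
      exact ⟨pow_nonneg h1 _, pow_le_one₀ h1 h2⟩
    refine le_trans (abs_prod_sub_prod_le Finset.univ _ _ hu hv) ?_
    have : ∀ j ∈ Finset.univ (α := Fin m),
        |Wt N (a j) (k j) - ((k j : ℝ) / N) ^ a j| ≤ (d * d : ℝ) / ((N : ℝ) - d) :=
      fun j _ => Wt_sub_pow_bound hd (exp_le_totalDegree ha j) (hk j)
    refine le_trans (Finset.sum_le_sum this) ?_
    rw [Finset.sum_const, Finset.card_univ, Fintype.card_fin, nsmul_eq_mul]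
  refine le_trans (Finset.abs_sum_le_sum_abs _ _) ?_
  rw [Finset.sum_mul]
  exact Finset.sum_le_sum step1





variable {m : ℕ}


theorem cube_rep (F : MvPolynomial (Fin m) ℝ)
    (hF : ∀ y : Fin m → ℝ, (∀ j, 0 ≤ y j ∧ y j ≤ 1) → 0 < eval y F) :
    ∃ N : ℕ, ∃ c : (Fin m → ℕ) → ℝ,
      (∀ k ∈ Fintype.piFinset (fun _ : Fin m => Finset.range (N + 1)), 0 < c k) ∧
      F = ∑ k ∈ Fintype.piFinset (fun _ : Fin m => Finset.range (N + 1)),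
        C (c k) * ∏ j, ((X j : MvPolynomial (Fin m) ℝ) ^ k j * (1 - X j) ^ (N - k j)) := by
  classical
  set K : Set (Fin m → ℝ) := Set.Icc 0 1 with hKdef
  have hmemK : ∀ y : Fin m → ℝ, y ∈ K ↔ (∀ j, 0 ≤ y j ∧ y j ≤ 1) := by
    intro y
    constructor
    · rintro ⟨h1, h2⟩ j
      exact ⟨h1 j, h2 j⟩
    · intro h
      exact ⟨fun j => (h j).1, fun j => (h j).2⟩
  have h0K : (0 : Fin m → ℝ) ∈ K := (hmemK 0).2 (fun j => by norm_num)
  have hcont : Continuous fun y : Fin m → ℝ => eval y F := MvPolynomial.continuous_eval F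
  obtain ⟨y₀, hy₀K, hmin'⟩ :=
    (isCompact_Icc (a := (0 : Fin m → ℝ)) (b := 1)).exists_isMinOn ⟨0, h0K⟩ hcont.continuousOn
  have hmin : ∀ y ∈ K, eval y₀ F ≤ eval y F := fun y hy => hmin' hy
  set ε := eval y₀ F with hεdef
  have hε : 0 < ε := hF y₀ ((hmemK y₀).1 hy₀K)
  set L := ∑ a ∈ F.support, |F.coeff a| with hLdef
  have hL : 0 ≤ L := Finset.sum_nonneg fun a _ => abs_nonneg _
  set d := F.totalDegree with hddef
  set T : ℝ := L * (m * (d * d)) with hTdef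
  have hT : 0 ≤ T := by positivity
  obtain ⟨N, hNgt⟩ := exists_nat_gt ((d : ℝ) + T / ε + 1)
  have hdN : d < N := by
    have h1 : (d : ℝ) < N := by
      have := div_nonneg hT hε.le
      linarith
    exact_mod_cast h1
  have hNd : (0 : ℝ) < (N : ℝ) - d := by
    have : (d : ℝ) < N := by exact_mod_cast hdN
    linarith
  have hbound : L * (m * ((d * d : ℝ) / ((N : ℝ) - d))) < ε := by
    have heq : L * (m * ((d * d : ℝ) / ((N : ℝ) - d))) = T / ((N : ℝ) - d) := by
      field_simp
      rw [hTdef]; ring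
    rw [heq, div_lt_iff₀ hNd]
    have h2 : T / ε + 1 ≤ (N : ℝ) - d := by
      have hdR : (d : ℝ) ≤ N := by exact_mod_cast hdN.le
      linarith
    have h3 : T ≤ (T / ε) * ε := by
      rw [div_mul_cancel₀ _ hε.ne']
    nlinarith [mul_le_mul_of_nonneg_right h2 hε.le]
  have hexp : ∀ a ∈ F.support, ∀ j, (a : Fin m →₀ ℕ) j ≤ N :=
    fun a ha j => (exp_le_totalDegree ha j).trans hdN.le
  refine ⟨N, fun k => bernCoeff F N k * ∏ j, (N.choose (k j) : ℝ), ?_, F_eq_bern F N hexp⟩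
  intro k hk
  have hkN : ∀ j, k j ≤ N := by
    intro j
    have := Fintype.mem_piFinset.1 hk j
    simpa [Nat.lt_succ_iff] using this
  have hN0 : (0 : ℝ) < N := by
    have : 0 < N := Nat.lt_of_le_of_lt (Nat.zero_le d) hdN
    exact_mod_cast this
  have hyK : (fun j => (k j : ℝ) / N) ∈ K := by
    rw [hmemK]
    intro j
    constructor
    · positivity
    · rw [div_le_one hN0]
      exact_mod_cast hkN j
  have hevalbig : ε ≤ eval (fun j => (k j : ℝ) / N) F := hmin _ hyK
  have hclose := bernCoeff_close F hdN k hkN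
  have hcpos : 0 < bernCoeff F N k := by
    rw [abs_le] at hclose
    have := hclose.1
    rw [← hddef, ← hLdef] at this
    nlinarith [hbound, hevalbig]
  apply mul_pos hcpos
  apply Finset.prod_pos
  intro j _
  exact_mod_cast Nat.choose_pos (hkN j)


end KVaux




/-- Krivine–Vasilescu Positivstellensatz. -/
theorem krivine_vasilescu {n m : ℕ}
    (g : Fin m → MvPolynomial (Fin n) ℝ)
    (Ω : Set (Fin n → ℝ))
    (hΩ : Ω = {x : Fin n → ℝ | ∀ j, 0 ≤ MvPolynomial.eval x (g j)})
    (hcompact : IsCompact Ω)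
    (hnorm : ∀ x ∈ Ω, ∀ j, 0 ≤ MvPolynomial.eval x (g j) ∧ MvPolynomial.eval x (g j) ≤ 1)
    (hgen : Algebra.adjoin ℝ (Set.range g) = (⊤ : Subalgebra ℝ (MvPolynomial (Fin n) ℝ)))
    (f : MvPolynomial (Fin n) ℝ)
    (hf : ∀ x ∈ Ω, 0 < MvPolynomial.eval x f) :
    ∃ (S : Finset ((Fin m → ℕ) × (Fin m → ℕ))) (c : (Fin m → ℕ) × (Fin m → ℕ) → ℝ),
      (∀ ab ∈ S, 0 < c ab) ∧
      f = ∑ ab ∈ S, MvPolynomial.C (c ab) *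
            ∏ j, g j ^ (ab.1 j) * (1 - g j) ^ (ab.2 j) := by
  classical
  -- surjectivity of `aeval g`
  have hrange : (MvPolynomial.aeval (R := ℝ) g).range = ⊤ := by
    rw [← Algebra.adjoin_range_eq_range_aeval]
    exact hgen
  have hsurj : ∀ p : MvPolynomial (Fin n) ℝ, ∃ u : MvPolynomial (Fin m) ℝ, aeval g u = p := by
    intro p
    have hp : p ∈ (MvPolynomial.aeval (R := ℝ) g).range := by rw [hrange]; exact Algebra.mem_top
    exact hp
  obtain ⟨F₀, hF₀⟩ := hsurj f
  choose P hP using fun i => hsurj (X i)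
  -- the relation ideal and a sum of squares generating its real zero set
  set I : Ideal (MvPolynomial (Fin m) ℝ) :=
    RingHom.ker (MvPolynomial.aeval (R := ℝ) g).toRingHom with hIdef
  have hIfg : I.FG := IsNoetherian.noetherian I
  obtain ⟨s, hs⟩ := hIfg
  set q : MvPolynomial (Fin m) ℝ := ∑ h ∈ s, h * h with hqdef
  have hsI : ∀ h ∈ s, aeval g h = 0 := by
    intro h hh
    have : h ∈ I := by rw [← hs]; exact Ideal.subset_span hh
    exact this
  have hq0 : aeval g q = 0 := by
    rw [hqdef, map_sum]
    apply Finset.sum_eq_zero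
    intro h hh
    rw [map_mul, hsI h hh, zero_mul]
  have hqnonneg : ∀ y : Fin m → ℝ, 0 ≤ eval y q := by
    intro y
    rw [hqdef, map_sum]
    apply Finset.sum_nonneg
    intro h _
    rw [map_mul]
    exact mul_self_nonneg _
  -- the key transfer: on the real zero set of I inside the cube, F₀ is positive
  have key : ∀ y : Fin m → ℝ, (∀ j, 0 ≤ y j ∧ y j ≤ 1) → eval y q = 0 → 0 < eval y F₀ := by
    intro y hy hyq
    have hzero : ∀ h ∈ s, eval y h = 0 := by
      intro h hh
      have hsum : ∑ h ∈ s, eval y h * eval y h = 0 := by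
        rw [hqdef, map_sum] at hyq
        simpa [map_mul] using hyq
      have := (Finset.sum_eq_zero_iff_of_nonneg (fun h _ => mul_self_nonneg (eval y h))).1 hsum h hh
      exact mul_self_eq_zero.1 this
    have hI0 : ∀ p ∈ I, eval y p = 0 := by
      intro p hp
      rw [← hs] at hp
      obtain ⟨w, -, hw⟩ := Submodule.mem_span_finset.1 hp
      rw [← hw, map_sum]
      apply Finset.sum_eq_zero
      intro h hh
      rw [smul_eq_mul, map_mul, hzero h hh, mul_zero]
    have hfactor : ∀ u v : MvPolynomial (Fin m) ℝ, aeval g u = aeval g v → eval y u = eval y v := by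
      intro u v huv
      have huvI : u - v ∈ I := by
        have : aeval g (u - v) = 0 := by rw [map_sub, huv, sub_self]
        exact this
      have := hI0 _ huvI
      rw [map_sub, sub_eq_zero] at this
      exact this
    set x : Fin n → ℝ := fun i => eval y (P i) with hxdef
    have hcomp : ∀ u : MvPolynomial (Fin n) ℝ, eval x u = eval y (aeval P u) := by
      have hhom : (MvPolynomial.eval x) =
          (MvPolynomial.eval y).comp (MvPolynomial.aeval (R := ℝ) P).toRingHom := by
        apply MvPolynomial.ringHom_ext
        · intro r
          simp [algHom_C]
        · intro i
          simp [hxdef]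
      intro u
      rw [hhom]
      rfl
    have hidem : ∀ w : MvPolynomial (Fin n) ℝ, aeval g (aeval P w) = w := by
      have : (MvPolynomial.aeval (R := ℝ) g).comp (MvPolynomial.aeval (R := ℝ) P) =
          AlgHom.id ℝ (MvPolynomial (Fin n) ℝ) := by
        apply MvPolynomial.algHom_ext
        intro i
        simp only [AlgHom.comp_apply, AlgHom.id_apply, aeval_X, hP]
      intro w
      have := congrArg (fun φ => φ w) this
      simpa using this
    have hgx : ∀ j, eval x (g j) = y j := by
      intro j
      rw [hcomp]
      have : aeval g (aeval P (g j)) = aeval (R := ℝ) g (X j) := by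
        rw [hidem, aeval_X]
      rw [hfactor _ _ this, eval_X]
    have hxΩ : x ∈ Ω := by
      rw [hΩ]
      intro j
      rw [hgx j]
      exact (hy j).1
    have hfx : eval x f = eval y F₀ := by
      rw [hcomp]
      apply hfactor
      rw [hidem, hF₀]
    rw [← hfx]
    exact hf x hxΩ
  -- choose a multiplier to make F₀ + lam * q positive on the whole cube
  have hlam : ∃ lam : ℝ, 0 ≤ lam ∧
      ∀ y : Fin m → ℝ, (∀ j, 0 ≤ y j ∧ y j ≤ 1) →
        0 < eval y (F₀ + C lam * q) := by
    set K : Set (Fin m → ℝ) := Set.Icc 0 1 with hKdef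
    have hmemK : ∀ y : Fin m → ℝ, y ∈ K ↔ (∀ j, 0 ≤ y j ∧ y j ≤ 1) := by
      intro y
      constructor
      · rintro ⟨h1, h2⟩ j; exact ⟨h1 j, h2 j⟩
      · intro h; exact ⟨fun j => (h j).1, fun j => (h j).2⟩
    set T : Set (Fin m → ℝ) := K ∩ {y | eval y F₀ ≤ 0} with hTdef
    have hTclosed : IsClosed {y : Fin m → ℝ | eval y F₀ ≤ 0} :=
      isClosed_le (MvPolynomial.continuous_eval F₀) continuous_const
    have hTcompact : IsCompact T := isCompact_Icc.inter_right hTclosed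
    rcases T.eq_empty_or_nonempty with hT | hT
    · refine ⟨0, le_rfl, ?_⟩
      intro y hy
      have : y ∉ T := by rw [hT]; exact Set.notMem_empty y
      rw [hTdef] at this
      simp only [Set.mem_inter_iff, Set.mem_setOf_eq, not_and, not_le] at this
      have := this ((hmemK y).2 hy)
      simpa using this.trans_eq (by simp)
    · obtain ⟨yq, hyqT, hyqmin⟩ := hTcompact.exists_isMinOn hT
        (MvPolynomial.continuous_eval q).continuousOn
      set δ := eval yq q with hδdef
      have hδpos : 0 < δ := by
        rcases lt_or_eq_of_le (hqnonneg yq) with h | h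
        · exact h
        · exfalso
          have hyqK : ∀ j, 0 ≤ yq j ∧ yq j ≤ 1 := (hmemK yq).1 hyqT.1
          have := key yq hyqK h.symm
          have h2 : eval yq F₀ ≤ 0 := hyqT.2
          linarith
      obtain ⟨y₁, hy₁K, hy₁min⟩ := (isCompact_Icc (a := (0 : Fin m → ℝ)) (b := 1)).exists_isMinOn
        ⟨0, (hmemK 0).2 (fun j => by norm_num)⟩ (MvPolynomial.continuous_eval F₀).continuousOn
      set B := eval y₁ F₀ with hBdef
      refine ⟨(1 + |B|) / δ, by positivity, ?_⟩
      intro y hy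
      rw [map_add, map_mul, eval_C]
      rcases lt_or_ge 0 (eval y F₀) with h | h
      · have h1 : 0 ≤ (1 + |B|) / δ * eval y q := by
          apply mul_nonneg (by positivity) (hqnonneg y)
        linarith
      · have hyT : y ∈ T := ⟨(hmemK y).2 hy, h⟩
        have h1 : δ ≤ eval y q := hyqmin hyT
        have h2 : B ≤ eval y F₀ := hy₁min ((hmemK y).2 hy)
        have h3 : (1 + |B|) / δ * δ ≤ (1 + |B|) / δ * eval y q := by
          apply mul_le_mul_of_nonneg_left h1 (by positivity)
        rw [div_mul_cancel₀ _ hδpos.ne'] at h3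
        have h4 : -|B| ≤ B := neg_abs_le B
        linarith
  obtain ⟨lam, hlam0, hlampos⟩ := hlam
  set F : MvPolynomial (Fin m) ℝ := F₀ + C lam * q with hFdef
  have hFf : aeval g F = f := by
    rw [hFdef, map_add, map_mul, hq0, mul_zero, add_zero, hF₀]
  obtain ⟨N, c, hcpos, hrep⟩ := KVaux.cube_rep F hlampos
  refine ⟨(Fintype.piFinset (fun _ : Fin m => Finset.range (N + 1))).image
      (fun k => (k, fun j => N - k j)), fun ab => c ab.1, ?_, ?_⟩
  · intro ab hab
    obtain ⟨k, hk, rfl⟩ := Finset.mem_image.1 hab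
    exact hcpos k hk
  · rw [Finset.sum_image (fun a _ b _ h => congrArg Prod.fst h)]
    have := congrArg (aeval (R := ℝ) g) hrep
    rw [hFf, map_sum] at this
    rw [this]
    apply Finset.sum_congr rfl
    intro k _
    rw [map_mul, map_prod]
    congr 1
    · rw [aeval_C, algebraMap_eq]
    · apply Finset.prod_congr rfl
      intro j _
      simp only [map_mul, map_pow, map_sub, map_one, aeval_X]
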